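/- For a symmetric positive semidefinite matrix L̂ ∈ ℝ^{N×N}, a matrix X ∈ ℝ^{N×F}, and a weight matrix W ∈ ℝ^{F×F'}, the Dirichlet energy E(X) := tr(Xᵀ L̂ X) satisfies E(XW) ≤ ‖Wᵀ‖₂² · E(X), where ‖Wᵀ‖₂ is the largest singular value of W. -/

import Mathlib

open Matrix
open scoped Matrix.Norms.L2Operator

private lemma psd_trace_nonneg {k : ℕ} {A : Matrix (Fin k) (Fin k) ℝ}
    (hA : A.PosSemidef) : 0 ≤ Matrix.trace A := by
  rw [Matrix.trace]
  refine Finset.sum_nonneg fun i _ => ?_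
  have := hA.dotProduct_mulVec_nonneg (Pi.single i 1)
  simpa [dotProduct, Matrix.mulVec, Pi.single_apply] using this

private lemma psd_trace_mul_nonneg {k : ℕ} {A B : Matrix (Fin k) (Fin k) ℝ}
    (hA : A.PosSemidef) (hB : B.PosSemidef) : 0 ≤ Matrix.trace (A * B) := by
  obtain ⟨S, hS, rfl⟩ : ∃ S : Matrix (Fin k) (Fin k) ℝ, S.PosSemidef ∧ S * S = B :=
    open scoped MatrixOrder in
    ⟨CFC.sqrt B, (CFC.sqrt_nonneg B).posSemidef, CFC.sqrt_mul_sqrt_self B hB.nonneg⟩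
  have hSt : Sᵀ = S := by
    have := hS.1
    rwa [Matrix.IsHermitian, Matrix.conjTranspose_eq_transpose_of_trivial] at this
  have h1 : Matrix.trace (A * (S * S)) = Matrix.trace (S * A * S) := by
    rw [← mul_assoc]; exact Matrix.trace_mul_cycle A S S
  rw [h1]
  have h2 : (S * A * S).PosSemidef := by
    have := hA.mul_mul_conjTranspose_same S
    rwa [Matrix.conjTranspose_eq_transpose_of_trivial, hSt] at this
  exact psd_trace_nonneg h2

private lemma dot_self_eq_norm_sq {k : ℕ} (z : Fin k → ℝ) :
    z ⬝ᵥ z = ‖(WithLp.equiv 2 (Fin k → ℝ)).symm z‖ ^ 2 := by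
  rw [← real_inner_self_eq_norm_sq, PiLp.inner_apply]
  simp [dotProduct, RCLike.inner_apply, sq]

private lemma psd_smul_one_sub {F F' : ℕ} (W : Matrix (Fin F) (Fin F') ℝ) :
    Matrix.PosSemidef ((‖Wᵀ‖ ^ 2) • (1 : Matrix (Fin F) (Fin F) ℝ) - W * Wᵀ) := by
  rw [Matrix.posSemidef_iff_dotProduct_mulVec]
  constructor
  · simp [Matrix.IsHermitian, Matrix.conjTranspose_eq_transpose_of_trivial,
      Matrix.transpose_sub, Matrix.transpose_smul, Matrix.transpose_one,
      Matrix.transpose_mul, Matrix.transpose_transpose]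
  · intro x
    have hx : star x = x := by simp
    rw [hx, Matrix.sub_mulVec, dotProduct_sub, Matrix.smul_mulVec,
      Matrix.one_mulVec, dotProduct_smul, sub_nonneg]
    have hquad : x ⬝ᵥ (W * Wᵀ) *ᵥ x = (Wᵀ *ᵥ x) ⬝ᵥ (Wᵀ *ᵥ x) := by
      rw [← Matrix.mulVec_mulVec, Matrix.dotProduct_mulVec, ← Matrix.mulVec_transpose]
    rw [hquad, dot_self_eq_norm_sq, dot_self_eq_norm_sq]
    set x' : EuclideanSpace ℝ (Fin F) := (WithLp.equiv 2 (Fin F → ℝ)).symm x with hx'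
    have h := Matrix.l2_opNorm_mulVec Wᵀ x'
    have hxx : Wᵀ *ᵥ x' = Wᵀ *ᵥ x := rfl
    have hxn : ‖x'‖ = ‖(WithLp.equiv 2 (Fin F → ℝ)).symm x‖ := rfl
    calc ‖(WithLp.equiv 2 (Fin F' → ℝ)).symm (Wᵀ *ᵥ x)‖ ^ 2
        ≤ (‖Wᵀ‖ * ‖x'‖) ^ 2 := by
          apply pow_le_pow_left₀ (norm_nonneg _)
          exact h
      _ = ‖Wᵀ‖ ^ 2 • ‖(WithLp.equiv 2 (Fin F → ℝ)).symm x‖ ^ 2 := by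
          rw [mul_pow, hxn]; rfl

theorem dirichlet_energy_weight_bound {n F F' : ℕ}
    (L : Matrix (Fin n) (Fin n) ℝ) (hL : L.PosSemidef)
    (X : Matrix (Fin n) (Fin F) ℝ) (W : Matrix (Fin F) (Fin F') ℝ) :
    Matrix.trace ((X * W)ᵀ * L * (X * W)) ≤ ‖Wᵀ‖ ^ 2 * Matrix.trace (Xᵀ * L * X) := by
  have hM : (Xᵀ * L * X).PosSemidef := by
    have := hL.conjTranspose_mul_mul_same X
    rwa [Matrix.conjTranspose_eq_transpose_of_trivial] at this
  set M := Xᵀ * L * X with hMdef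
  have hre : (X * W)ᵀ * L * (X * W) = Wᵀ * M * W := by
    rw [hMdef, Matrix.transpose_mul]
    simp only [Matrix.mul_assoc]
  have htr : Matrix.trace (Wᵀ * M * W) = Matrix.trace (M * (W * Wᵀ)) := by
    rw [Matrix.trace_mul_cycle, Matrix.trace_mul_comm]
  have key := psd_trace_mul_nonneg hM (psd_smul_one_sub W)
  rw [mul_sub, Matrix.mul_smul, mul_one, Matrix.trace_sub, Matrix.trace_smul, sub_nonneg,
    smul_eq_mul] at key
  rw [hre, htr]
  exact key
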